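/- Let γ₁, γ₂ > 0 with γ₁ ≠ γ₂, and k(y) = sqrt(γ₁² + γ₂² + 2γ₁γ₂ cos(y)) on [0, π]. Then sup_{y ∈ [0,π]} |k'(y)| = min{γ₁, γ₂}, attained at y_M = arccos(-min{γ₁,γ₂}/max{γ₁,γ₂}). -/

import Mathlib

open Real

lemma k_deriv_aux
    (a b : ℝ) (ha : 0 < a) (hab : a < b)
    (k : ℝ → ℝ)
    (hk : ∀ y, k y = Real.sqrt (a ^ 2 + b ^ 2 + 2 * a * b * Real.cos y))
    (k' : ℝ → ℝ)
    (hk' : ∀ y, k' y = -(a * b * Real.sin y) / k y) :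
    (∀ y ∈ Set.Icc 0 π, |k' y| ≤ a) ∧
    Real.arccos (-(a / b)) ∈ Set.Icc 0 π ∧
    |k' (Real.arccos (-(a / b)))| = a := by
  have hb : 0 < b := ha.trans hab
  have hpos : ∀ y, 0 < a ^ 2 + b ^ 2 + 2 * a * b * Real.cos y := by
    intro y
    nlinarith [Real.neg_one_le_cos y, sq_nonneg (b - a), mul_pos ha hb]
  have hk_pos : ∀ y, 0 < k y := by
    intro y; rw [hk y]; exact Real.sqrt_pos.mpr (hpos y)
  have hk_sq : ∀ y, (k y) ^ 2 = a ^ 2 + b ^ 2 + 2 * a * b * Real.cos y := by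
    intro y; rw [hk y]; exact Real.sq_sqrt (hpos y).le
  refine ⟨?_, ⟨Real.arccos_nonneg _, Real.arccos_le_pi _⟩, ?_⟩
  · intro y hy
    have hs : 0 ≤ Real.sin y := Real.sin_nonneg_of_nonneg_of_le_pi hy.1 hy.2
    rw [hk' y, abs_div, abs_neg, abs_of_nonneg (by positivity), abs_of_pos (hk_pos y),
      div_le_iff₀ (hk_pos y)]
    have key : (a * k y) ^ 2 - (a * b * Real.sin y) ^ 2 = (a * (a + b * Real.cos y)) ^ 2 := by
      linear_combination a ^ 2 * hk_sq y - a ^ 2 * b ^ 2 * Real.sin_sq_add_cos_sq y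
    nlinarith [key, sq_nonneg (a * (a + b * Real.cos y)), mul_pos ha (hk_pos y),
      mul_nonneg (mul_nonneg ha.le hb.le) hs]
  · set yM := Real.arccos (-(a / b)) with hyM
    have hab1 : a / b ≤ 1 := (div_le_one hb).mpr hab.le
    have hcos : Real.cos yM = -(a / b) := by
      apply Real.cos_arccos
      · linarith [div_nonneg ha.le hb.le]
      · linarith [div_nonneg ha.le hb.le]
    have hD : 0 < b ^ 2 - a ^ 2 := by nlinarith
    have hsD : 0 < Real.sqrt (b ^ 2 - a ^ 2) := Real.sqrt_pos.mpr hD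
    have hsin : Real.sin yM = Real.sqrt (b ^ 2 - a ^ 2) / b := by
      rw [hyM, Real.sin_arccos]
      have h1 : 1 - (-(a / b)) ^ 2 = (b ^ 2 - a ^ 2) / b ^ 2 := by
        field_simp
      rw [h1, Real.sqrt_div hD.le, Real.sqrt_sq hb.le]
    have hkval : k yM = Real.sqrt (b ^ 2 - a ^ 2) := by
      rw [hk yM, hcos]
      congr 1
      field_simp
      ring
    rw [hk' yM, hsin, hkval]
    have : -(a * b * (Real.sqrt (b ^ 2 - a ^ 2) / b)) / Real.sqrt (b ^ 2 - a ^ 2) = -a := by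
      field_simp
    rw [this, abs_neg, abs_of_pos ha]

theorem k_deriv_sup_eq_min
    (γ₁ γ₂ : ℝ) (h₁ : 0 < γ₁) (h₂ : 0 < γ₂) (hne : γ₁ ≠ γ₂)
    (k : ℝ → ℝ)
    (hk : ∀ y, k y = Real.sqrt (γ₁ ^ 2 + γ₂ ^ 2 + 2 * γ₁ * γ₂ * Real.cos y))
    (k' : ℝ → ℝ)
    (hk' : ∀ y, k' y = -(γ₁ * γ₂ * Real.sin y) / k y) :
    (∀ y ∈ Set.Icc 0 π, |k' y| ≤ min γ₁ γ₂) ∧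
    Real.arccos (-(min γ₁ γ₂ / max γ₁ γ₂)) ∈ Set.Icc 0 π ∧
    |k' (Real.arccos (-(min γ₁ γ₂ / max γ₁ γ₂)))| = min γ₁ γ₂ := by
  rcases lt_or_gt_of_ne hne with h | h
  · rw [min_eq_left h.le, max_eq_right h.le]
    exact k_deriv_aux γ₁ γ₂ h₁ h k hk k' hk'
  · rw [min_eq_right h.le, max_eq_left h.le]
    refine k_deriv_aux γ₂ γ₁ h₂ h k ?_ k' ?_
    · intro y; rw [hk y]; ring_nf
    · intro y; rw [hk' y]; ring_nf
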